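/- Successive flat tetrahedrons of a local trajectory are connected via a common face containing a long edge (upward step): for every a ∈ ℤ⁴ and pairwise distinct i,j,k ∈ {1,2,3,4}, the intersection π(T(a;i,j,k)) ∩ π(T(a−e_k;k,i,j)) equals the projected triangle π(conv{a, a+eᵢ, a+eᵢ+eⱼ}); moreover this common face contains the edge from π(a) to π(a+eᵢ+eⱼ), which has length 1 (a long edge of both tetrahedrons). -/

import Mathlib

noncomputable section

/-- Ambient space ℝ⁴. -/
abbrev E4 := EuclideanSpace ℝ (Fin 4)

/-- Standard basis vector eᵢ of ℝ⁴. -/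
def ee4 (i : Fin 4) : E4 := EuclideanSpace.single i 1

/-- 𝟙 = e₁ + e₂ + e₃ + e₄. -/
def ones4 : E4 := ∑ i, ee4 i

/-- Orthogonal projection π onto the hyperplane H = {v ∈ ℝ⁴ : v₁+v₂+v₃+v₄ = 0},
    given by π(v) = v − ((v₁+v₂+v₃+v₄)/4)·𝟙. -/
def proj4 (v : E4) : E4 := v - ((∑ i, v i) / 4) • ones4

/-- A lattice point of ℤ⁴ viewed in ℝ⁴. -/
def toE4 (a : Fin 4 → ℤ) : E4 := WithLp.toLp 2 (fun n => (a n : ℝ))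

/-- Slant tetrahedron T(a;i,j,k) = conv{a, a+eᵢ, a+eᵢ+eⱼ, a+eᵢ+eⱼ+e_k}. -/
def slant4 (a : Fin 4 → ℤ) (i j k : Fin 4) : Set E4 :=
  convexHull ℝ {toE4 a, toE4 a + ee4 i, toE4 a + ee4 i + ee4 j,
    toE4 a + ee4 i + ee4 j + ee4 k}

/-- Flat tetrahedron: the image π(T(a;i,j,k)). -/
def flat4 (a : Fin 4 → ℤ) (i j k : Fin 4) : Set E4 := proj4 '' slant4 a i j k


lemma ones4_apply (m : Fin 4) : ones4 m = 1 := by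
  simp [ones4, ee4, Fin.sum_univ_four, EuclideanSpace.single_apply]
  fin_cases m <;> simp

def projL : E4 →ₗ[ℝ] E4 where
  toFun := proj4
  map_add' x y := by
    simp only [proj4]
    have h : ∑ m, (x + y) m = (∑ m, x m) + ∑ m, y m := by
      simp [Finset.sum_add_distrib]
    rw [h, add_div, add_smul]
    abel
  map_smul' r x := by
    simp only [proj4, RingHom.id_apply]
    have h : ∑ m, (r • x) m = r * ∑ m, x m := by
      simp [Finset.mul_sum]
    rw [h, smul_sub, mul_div_assoc, smul_smul]

def fL (k l : Fin 4) : E4 →ₗ[ℝ] ℝ where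
  toFun v := v k - v l
  map_add' x y := by simp; ring
  map_smul' r x := by simp; ring

lemma fL_proj (k l : Fin 4) (v : E4) : fL k l (proj4 v) = fL k l v := by
  simp [fL, proj4, ones4_apply]

lemma face_lemma (k l : Fin 4) {w : E4} {S : Set E4} (hS : S.Nonempty) (c : ℝ)
    (hSc : ∀ v ∈ S, fL k l v = c) (hw : fL k l w = c + 1) {y : E4}
    (hy : y ∈ convexHull ℝ (insert w S)) (hyc : fL k l y = c) :
    y ∈ convexHull ℝ S := by
  rw [convexHull_insert hS, mem_convexJoin] at hy
  obtain ⟨x', hx', z, hz, hseg⟩ := hy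
  rw [Set.mem_singleton_iff] at hx'
  subst hx'
  have hzc : fL k l z = c := by
    have : convexHull ℝ S ⊆ {v | fL k l v = c} :=
      convexHull_min (fun v hv => hSc v hv) (convex_hyperplane (fL k l).isLinear c)
    exact this hz
  obtain ⟨u, t, hu, ht, hut, heq⟩ := hseg
  have : fL k l y = c + u := by
    rw [← heq]
    simp only [map_add, map_smul, smul_eq_mul, hw, hzc]
    linear_combination c * hut
  have hu0 : u = 0 := by linarith [hyc, this]
  have ht1 : t = 1 := by linarith
  rw [← heq, hu0, ht1]
  simpa using hz

lemma proj4_add (x y : E4) : proj4 (x + y) = proj4 x + proj4 y := map_add projL x y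

lemma ee4_sum (i : Fin 4) : ∑ m, ee4 i m = 1 := by
  simp [ee4, EuclideanSpace.single_apply]


/-- upward step: π(T(a;i,j,k)) ∩ π(T(a−e_k;k,i,j)) equals the
projected triangle π(conv{a, a+eᵢ, a+eᵢ+eⱼ}); this common face contains the
long edge from π(a) to π(a+eᵢ+eⱼ), of length 1. -/
theorem stmt14 (a : Fin 4 → ℤ) (i j k : Fin 4)
    (hij : i ≠ j) (hik : i ≠ k) (hjk : j ≠ k) :
    flat4 a i j k ∩ flat4 (a - Pi.single k 1) k i j =
      proj4 '' convexHull ℝ {toE4 a, toE4 a + ee4 i, toE4 a + ee4 i + ee4 j} ∧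
    segment ℝ (proj4 (toE4 a)) (proj4 (toE4 a + ee4 i + ee4 j)) ⊆
      proj4 '' convexHull ℝ {toE4 a, toE4 a + ee4 i, toE4 a + ee4 i + ee4 j} ∧
    dist (proj4 (toE4 a)) (proj4 (toE4 a + ee4 i + ee4 j)) = 1 := by
  have hex : ∀ (i j k : Fin 4), i ≠ j → i ≠ k → j ≠ k →
      ∃ l, l ≠ i ∧ l ≠ j ∧ l ≠ k := by decide
  obtain ⟨l, hli, hlj, hlk⟩ := hex i j k hij hik hjk
  set v0 : E4 := toE4 a with hv0
  set S : Set E4 := {v0, v0 + ee4 i, v0 + ee4 i + ee4 j} with hSdef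
  set c : ℝ := (a k : ℝ) - (a l : ℝ) with hc
  -- fL values
  have hf0 : fL k l v0 = c := by simp [fL, v0, toE4, c]
  have hfi : fL k l (ee4 i) = 0 := by
    simp [fL, ee4, EuclideanSpace.single_apply, Ne.symm hik, hli]
  have hfj : fL k l (ee4 j) = 0 := by
    simp [fL, ee4, EuclideanSpace.single_apply, Ne.symm hjk, hlj]
  have hfk : fL k l (ee4 k) = 1 := by
    simp [fL, ee4, EuclideanSpace.single_apply, hlk]
  have hSc : ∀ v ∈ S, fL k l v = c := by
    rintro v hv
    rcases hv with rfl | rfl | rfl <;> simp [map_add, hf0, hfi, hfj]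
  -- the two tetrahedra as insert-form hulls
  have hset1 : slant4 a i j k
      = convexHull ℝ (insert (v0 + ee4 i + ee4 j + ee4 k) S) := by
    rw [slant4]
    congr 1
    ext x
    simp only [Set.mem_insert_iff, Set.mem_singleton_iff, hSdef, hv0]
    tauto
  have hb : toE4 (a - Pi.single k 1) = v0 - ee4 k := by
    ext m
    simp only [toE4, ee4, v0, PiLp.toLp_apply, PiLp.sub_apply, Pi.sub_apply, Pi.single_apply,
      EuclideanSpace.single_apply]
    split_ifs <;> push_cast <;> ring
  have hset2 : slant4 (a - Pi.single k 1) k i j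
      = convexHull ℝ (insert (v0 - ee4 k) S) := by
    rw [slant4, hb]
    congr 1
    have h1 : v0 - ee4 k + ee4 k = v0 := by abel
    rw [h1]
  have hw1 : fL k l (v0 + ee4 i + ee4 j + ee4 k) = c + 1 := by
    simp [map_add, hf0, hfi, hfj, hfk]
  have hw2 : fL k l (v0 - ee4 k) = c - 1 := by
    simp [map_sub, hf0, hfk]
  have hS1 : S.Nonempty := ⟨v0, by simp [hSdef]⟩
  -- halfspace containments
  have hT1half : slant4 a i j k ⊆ {v | c ≤ fL k l v} := by
    rw [hset1]
    apply convexHull_min _ (convex_halfSpace_ge (fL k l).isLinear c)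
    rintro v hv
    rcases hv with rfl | hv
    · simp [Set.mem_setOf_eq, hw1]
    · simp [Set.mem_setOf_eq, hSc v hv]
  have hT2half : slant4 (a - Pi.single k 1) k i j ⊆ {v | fL k l v ≤ c} := by
    rw [hset2]
    apply convexHull_min _ (convex_halfSpace_le (fL k l).isLinear c)
    rintro v hv
    rcases hv with rfl | hv
    · simp [Set.mem_setOf_eq, hw2]
    · simp [Set.mem_setOf_eq, hSc v hv]
  refine ⟨?_, ?_, ?_⟩
  · apply Set.Subset.antisymm
    · rintro x ⟨⟨y1, hy1, rfl⟩, ⟨y2, hy2, hxy⟩⟩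
      have h1 : c ≤ fL k l y1 := hT1half hy1
      have h2 : fL k l y2 ≤ c := hT2half hy2
      have heqf : fL k l y1 = fL k l y2 := by
        rw [← fL_proj k l y1, ← fL_proj k l y2, hxy]
      have hyc : fL k l y1 = c := le_antisymm (heqf ▸ h2) h1
      rw [hset1] at hy1
      exact ⟨y1, face_lemma k l hS1 c hSc hw1 hy1 hyc, rfl⟩
    · rintro x ⟨y, hy, rfl⟩
      refine ⟨⟨y, ?_, rfl⟩, ⟨y, ?_, rfl⟩⟩
      · rw [hset1]
        exact convexHull_mono (Set.subset_insert _ _) hy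
      · rw [hset2]
        exact convexHull_mono (Set.subset_insert _ _) hy
  · have hconv : Convex ℝ (proj4 '' convexHull ℝ S) :=
      (convex_convexHull ℝ S).linear_image projL
    apply hconv.segment_subset
    · exact ⟨v0, subset_convexHull ℝ S (by simp [hSdef]), rfl⟩
    · exact ⟨v0 + ee4 i + ee4 j, subset_convexHull ℝ S (by simp [hSdef]), rfl⟩
  · have hdiff : proj4 (v0 + ee4 i + ee4 j) - proj4 v0 = proj4 (ee4 i + ee4 j) := by
      rw [add_assoc, proj4_add]
      abel
    rw [dist_eq_norm, ← norm_sub_rev, hdiff]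
    have hsum : ∑ m, (ee4 i + ee4 j) m = 2 := by
      have : ∀ m : Fin 4, (ee4 i + ee4 j) m = ee4 i m + ee4 j m := fun m => rfl
      simp only [this, Finset.sum_add_distrib, ee4_sum]
      norm_num
    have hd : ∀ m : Fin 4, (proj4 (ee4 i + ee4 j)) m
        = (if m = i then (1:ℝ) else 0) + (if m = j then (1:ℝ) else 0) - 1/2 := by
      intro m
      have h1 : proj4 (ee4 i + ee4 j) m
          = ee4 i m + ee4 j m - ((∑ n, (ee4 i + ee4 j) n) / 4) * ones4 m := rfl
      rw [h1, hsum, ones4_apply]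
      simp [ee4, EuclideanSpace.single_apply]
      norm_num
    have hd2 : ∀ m : Fin 4, ‖(proj4 (ee4 i + ee4 j)) m‖ ^ 2 = (1:ℝ)/4 := by
      intro m
      rw [hd m, Real.norm_eq_abs, sq_abs]
      by_cases h1 : m = i <;> by_cases h2 : m = j
      · exact absurd (h1.symm.trans h2) hij
      · rw [if_pos h1, if_neg h2]; norm_num
      · rw [if_neg h1, if_pos h2]; norm_num
      · rw [if_neg h1, if_neg h2]; norm_num
    rw [EuclideanSpace.norm_eq]
    rw [Finset.sum_congr rfl (fun m _ => hd2 m)]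
    simp [Finset.sum_const, Finset.card_univ]
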